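/- Let d ≥ 4 be an even integer and let 0 < ε′ < 2/(d² + 2d). Consider the d-player game in which each player has two actions a_1 (cost 0) and a_2 (cost c = 2/d − ε′), where in any pure profile a single prize of value 1 is shared equally among the players who play a_2 (or among all d players if all play a_1), and each player's payoff is his prize share minus his action's cost. Then every pure profile in which exactly d/2 players play a_2 (and the remaining d/2 play a_1) is a pure Nash equilibrium. -/

import Mathlib

open Finset

/-- Payoff in the symmetric binary single-prize game: `t i = true` means player
`i` plays the strong action `a₂` (cost `c`), `t i = false` means he plays the
weak action `a₁` (cost 0).  The single prize of value 1 is shared equally among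
the players playing `a₂`, or among all `d` players if none plays `a₂`. -/
noncomputable def payB (d : ℕ) (c : ℝ) (t : Fin d → Bool) (i : Fin d) : ℝ :=
  if t i then
    1 / (((Finset.univ.filter fun p => t p = true).card : ℕ) : ℝ) - c
  else if (Finset.univ.filter fun p => t p = true).card = 0 then 1 / (d : ℝ)
  else 0

/-- for even `d ≥ 4` and cost `c = 2/d - ε'` with
`0 < ε' < 2/(d²+2d)`, every pure profile in which exactly `d/2` players play
the strong action is a pure Nash equilibrium. -/
theorem half_profiles_are_pure_NE (d : ℕ) (hd : 4 ≤ d) (hev : Even d)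
    (ε' : ℝ) (hε'0 : 0 < ε') (hε'1 : ε' < 2 / ((d : ℝ) ^ 2 + 2 * d))
    (c : ℝ) (hc : c = 2 / (d : ℝ) - ε')
    (t : Fin d → Bool) (ht : (Finset.univ.filter fun p => t p = true).card = d / 2) :
    ∀ (i : Fin d) (b : Bool), payB d c (Function.update t i b) i ≤ payB d c t i := by
  obtain ⟨m, hm⟩ := hev
  have hdm : d = 2 * m := by omega
  have hm2 : 2 ≤ m := by omega
  have hd2 : d / 2 = m := by omega
  subst hdm
  have hmR : (0 : ℝ) < (m : ℝ) := by exact_mod_cast Nat.pos_of_ne_zero (by omega)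
  have hm1R : (0 : ℝ) < (m : ℝ) + 1 := by linarith
  intro i b
  set s := Finset.univ.filter fun p => t p = true with hs
  have hfilt : ∀ b : Bool,
      (Finset.univ.filter fun p => Function.update t i b p = true)
        = if b then insert i s else s.erase i := by
    intro b
    ext p
    by_cases hpi : p = i <;> cases b <;>
      simp [hs, hpi, Function.update_apply, Finset.mem_erase, Finset.mem_insert]
  have hmem : i ∈ s ↔ t i = true := by simp [hs]
  by_cases hti : t i = true
  · -- i plays true in t
    have hival : payB (2 * m) c t i = 1 / (m : ℝ) - c := by
      simp [payB, hti, ← hs, ht, hd2]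
    cases b
    · -- deviate to false
      have hcard : (Finset.univ.filter fun p => Function.update t i false p = true).card
          = m - 1 := by
        rw [hfilt false]
        simp only [if_neg Bool.false_ne_true, Bool.false_eq_true, if_false]
        rw [Finset.card_erase_of_mem (hmem.mpr hti), ht, hd2]
      have hpay : payB (2 * m) c (Function.update t i false) i = 0 := by
        simp [payB, hcard, Function.update_self]
        omega
      rw [hpay, hival, hc]
      push_cast
      have h2m : (2 : ℝ) / (2 * (m : ℝ)) = 1 / m := by
        rw [div_eq_div_iff (by linarith) hmR.ne']; ring
      linarith
    · -- stay true
      rw [show (true : Bool) = t i from hti.symm, Function.update_eq_self]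
  · -- i plays false in t
    have hti' : t i = false := by simpa using hti
    have hsne : s.card ≠ 0 := by rw [ht, hd2]; omega
    have hival : payB (2 * m) c t i = 0 := by
      simp [payB, hti', ← hs, hsne]
    cases b
    · -- stay false
      rw [show (false : Bool) = t i from hti'.symm, Function.update_eq_self]
    · -- deviate to true
      have hcard : (Finset.univ.filter fun p => Function.update t i true p = true).card
          = m + 1 := by
        rw [hfilt true]
        simp only [if_true]
        rw [Finset.card_insert_of_notMem (fun h => hti (hmem.mp h)), ht, hd2]
      have hpay : payB (2 * m) c (Function.update t i true) i
          = 1 / ((m : ℝ) + 1) - c := by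
        simp [payB, hcard, Function.update_self]
      rw [hpay, hival, hc]
      have hkey : ε' < 1 / ((m : ℝ) * (m + 1)) := by
        have h1 : ((2 * m : ℕ) : ℝ) ^ 2 + 2 * ((2 * m : ℕ) : ℝ)
            = 4 * ((m : ℝ) * (m + 1)) := by push_cast; ring
        have h2 : (0 : ℝ) < (m : ℝ) * (m + 1) := by positivity
        rw [h1] at hε'1
        calc ε' < 2 / (4 * ((m : ℝ) * (m + 1))) := hε'1
          _ ≤ 1 / ((m : ℝ) * (m + 1)) := by
              rw [div_le_div_iff₀ (by positivity) h2]; nlinarith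
      have h2m : (2 : ℝ) / ((2 * m : ℕ) : ℝ) = 1 / m := by
        push_cast
        rw [div_eq_div_iff (by linarith) hmR.ne']; ring
      rw [h2m]

      have : 1 / ((m : ℝ) + 1) ≤ 1 / (m : ℝ) - ε' := by
        have hsub : 1 / (m : ℝ) - 1 / ((m : ℝ) + 1) = 1 / ((m : ℝ) * (m + 1)) := by
          field_simp
          ring
        linarith [hkey, hsub]
      linarith
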